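/- Let T1 and T2 be two rooted phylogenetic trees chosen independently and uniformly at random (with replacement) from RP(n), the set of all rooted phylogenies over the taxon set [n]. Then for every p ∈ [0,1], E(d^(p)(T1,T2)) = C(n,3) · ( (2/3)·r'(n)^2 + 2·p·r'(n)·u'(n) ), where C(n,3) is 'n choose 3'. -/

import Mathlib

open Finset

attribute [local instance] Classical.propDecidable

/-- A rooted phylogenetic tree over the taxon set `Fin n`, encoded by its hierarchy of
clusters: for each node of the tree, the set of leaves descending from that node.
The conditions say that the whole leaf set and all singletons are clusters, the empty
set is not a cluster, and that the family is laminar.  Such families correspond exactly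
to rooted phylogenies in which every internal node has at least two children. -/
structure RTree (n : ℕ) where
  clusters : Finset (Finset (Fin n))
  univ_mem : Finset.univ ∈ clusters
  singleton_mem : ∀ x : Fin n, {x} ∈ clusters
  empty_not_mem : ∅ ∉ clusters
  laminar : ∀ C ∈ clusters, ∀ D ∈ clusters, C ⊆ D ∨ D ⊆ C ∨ C ∩ D = ∅

/-- All triplets (3-element subsets) of `Fin n`. -/
def triplets (n : ℕ) : Finset (Finset (Fin n)) :=
  Finset.powersetCard 3 Finset.univ

/-- The cluster family of the restriction `T|X`, for a rooted tree with cluster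
family `F`: the nonempty intersections of clusters with `X`. -/
noncomputable def famRestrict {n : ℕ} (F : Finset (Finset (Fin n))) (X : Finset (Fin n)) :
    Finset (Finset (Fin n)) :=
  (F.image (· ∩ X)).filter (· ≠ ∅)

/-- A triplet `X` is resolved in a rooted tree with cluster family `F` iff the
restriction `T|X` is fully resolved, equivalently iff some cluster contains exactly
two of the three elements of `X`. -/
def famResolved {n : ℕ} (F : Finset (Finset (Fin n))) (X : Finset (Fin n)) : Prop :=
  ∃ C ∈ F, (C ∩ X).card = 2

/-- Triplets resolved, identically, in both trees. -/
noncomputable def famSetS {n : ℕ} (F G : Finset (Finset (Fin n))) :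
    Finset (Finset (Fin n)) :=
  (triplets n).filter fun X =>
    famResolved F X ∧ famResolved G X ∧ famRestrict F X = famRestrict G X

/-- Triplets resolved, differently, in both trees. -/
noncomputable def famSetD {n : ℕ} (F G : Finset (Finset (Fin n))) :
    Finset (Finset (Fin n)) :=
  (triplets n).filter fun X =>
    famResolved F X ∧ famResolved G X ∧ famRestrict F X ≠ famRestrict G X

/-- Triplets resolved in the first tree but not in the second. -/
noncomputable def famSetR1 {n : ℕ} (F G : Finset (Finset (Fin n))) :
    Finset (Finset (Fin n)) :=
  (triplets n).filter fun X => famResolved F X ∧ ¬ famResolved G X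

/-- Triplets resolved in the second tree but not in the first. -/
noncomputable def famSetR2 {n : ℕ} (F G : Finset (Finset (Fin n))) :
    Finset (Finset (Fin n)) :=
  (triplets n).filter fun X => famResolved G X ∧ ¬ famResolved F X

/-- Triplets unresolved in both trees. -/
noncomputable def famSetU {n : ℕ} (F G : Finset (Finset (Fin n))) :
    Finset (Finset (Fin n)) :=
  (triplets n).filter fun X => ¬ famResolved F X ∧ ¬ famResolved G X

/-- The parametric triplet distance, at the level of cluster families. -/
noncomputable def famPdist {n : ℕ} (p : ℝ) (F G : Finset (Finset (Fin n))) : ℝ :=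
  ((famSetD F G).card : ℝ) +
    p * (((famSetR1 F G).card : ℝ) + ((famSetR2 F G).card : ℝ))

namespace RTree

variable {n : ℕ}

/-- The cluster family of the restriction `T|X`. -/
noncomputable def restrict (T : RTree n) (X : Finset (Fin n)) : Finset (Finset (Fin n)) :=
  famRestrict T.clusters X

/-- The triplet `X` is resolved in `T`, i.e. `T|X` is fully resolved. -/
def Resolved (T : RTree n) (X : Finset (Fin n)) : Prop :=
  famResolved T.clusters X

/-- A rooted phylogeny is fully resolved (all internal nodes have exactly two
children) iff every triplet is resolved in it. -/
def FullyResolved (T : RTree n) : Prop :=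
  ∀ X ∈ triplets n, T.Resolved X

noncomputable def setS (T₁ T₂ : RTree n) : Finset (Finset (Fin n)) :=
  famSetS T₁.clusters T₂.clusters

noncomputable def setD (T₁ T₂ : RTree n) : Finset (Finset (Fin n)) :=
  famSetD T₁.clusters T₂.clusters

noncomputable def setR1 (T₁ T₂ : RTree n) : Finset (Finset (Fin n)) :=
  famSetR1 T₁.clusters T₂.clusters

noncomputable def setR2 (T₁ T₂ : RTree n) : Finset (Finset (Fin n)) :=
  famSetR2 T₁.clusters T₂.clusters

noncomputable def setU (T₁ T₂ : RTree n) : Finset (Finset (Fin n)) :=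
  famSetU T₁.clusters T₂.clusters

/-- The parametric triplet distance `d⁽ᵖ⁾(T₁,T₂)`. -/
noncomputable def pdist (p : ℝ) (T₁ T₂ : RTree n) : ℝ :=
  famPdist p T₁.clusters T₂.clusters

theorem clusters_injective : Function.Injective (clusters (n := n)) := by
  rintro ⟨s₁, _, _, _, _⟩ ⟨s₂, _, _, _, _⟩ h
  simp only [mk.injEq] at h ⊢
  exact h

noncomputable instance : Fintype (RTree n) :=
  Fintype.ofInjective clusters clusters_injective

end RTree

/-- `r'(n)` : the probability that the fixed triplet `X` is resolved in a rooted
phylogeny chosen uniformly at random from `RP(n)`.  (By symmetry this does not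
depend on the choice of the triplet `X`.) -/
noncomputable def rResProb (n : ℕ) (X : Finset (Fin n)) : ℝ :=
  ((Finset.univ.filter fun T : RTree n => T.Resolved X).card : ℝ) /
    (Fintype.card (RTree n) : ℝ)

section AuxProof

open Finset Equiv

variable {n : ℕ}

/-- `P` occurs as the intersection of a cluster of `F` with `X`. -/
def auxHasPair (F : Finset (Finset (Fin n))) (X P : Finset (Fin n)) : Prop :=
  ∃ C ∈ F, C ∩ X = P

lemma auxResolved_iff (F : Finset (Finset (Fin n))) (X : Finset (Fin n)) :
    famResolved F X ↔ ∃ P ∈ X.powersetCard 2, auxHasPair F X P := by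
  constructor
  · rintro ⟨C, hC, h2⟩
    exact ⟨C ∩ X, Finset.mem_powersetCard.2 ⟨Finset.inter_subset_right, h2⟩, C, hC, rfl⟩
  · rintro ⟨P, hP, C, hC, rfl⟩
    exact ⟨C, hC, (Finset.mem_powersetCard.1 hP).2⟩

lemma auxPair_unique (T : RTree n) {X P Q : Finset (Fin n)} (hX : X.card = 3)
    (hP : P ∈ X.powersetCard 2) (hQ : Q ∈ X.powersetCard 2)
    (h1 : auxHasPair T.clusters X P) (h2 : auxHasPair T.clusters X Q) : P = Q := by
  obtain ⟨hPX, hP2⟩ := Finset.mem_powersetCard.1 hP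
  obtain ⟨hQX, hQ2⟩ := Finset.mem_powersetCard.1 hQ
  obtain ⟨C, hC, rfl⟩ := h1
  obtain ⟨D, hD, rfl⟩ := h2
  rcases T.laminar C hC D hD with h | h | h
  · exact Finset.eq_of_subset_of_card_le
      (Finset.inter_subset_inter h (subset_refl X)) (by omega)
  · exact (Finset.eq_of_subset_of_card_le
      (Finset.inter_subset_inter h (subset_refl X)) (by omega)).symm
  · exfalso
    have hdisj : Disjoint (C ∩ X) (D ∩ X) := by
      rw [Finset.disjoint_iff_inter_eq_empty, ← Finset.subset_empty]
      intro x hx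
      simp only [Finset.mem_inter] at hx
      rw [← h]
      exact Finset.mem_inter.2 ⟨hx.1.1, hx.2.1⟩
    have hcu := Finset.card_union_of_disjoint hdisj
    have hsub : (C ∩ X) ∪ (D ∩ X) ⊆ X :=
      Finset.union_subset Finset.inter_subset_right Finset.inter_subset_right
    have := Finset.card_le_card hsub
    omega

lemma auxRestrict_eq (T : RTree n) {X P : Finset (Fin n)} (hX : X.card = 3)
    (hP : P ∈ X.powersetCard 2) (h1 : auxHasPair T.clusters X P) :
    famRestrict T.clusters X =
      X.powerset.filter fun S => S ≠ ∅ ∧ (S.card = 2 → S = P) := by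
  obtain ⟨hPX, hP2⟩ := Finset.mem_powersetCard.1 hP
  ext S
  simp only [famRestrict, Finset.mem_filter, Finset.mem_image, Finset.mem_powerset]
  constructor
  · rintro ⟨⟨C, hC, rfl⟩, hne⟩
    refine ⟨Finset.inter_subset_right, hne, fun hc2 => ?_⟩
    exact auxPair_unique T hX (Finset.mem_powersetCard.2 ⟨Finset.inter_subset_right, hc2⟩)
      hP ⟨C, hC, rfl⟩ h1
  · rintro ⟨hSX, hne, hc2⟩
    have hcard : S.card = 1 ∨ S.card = 2 ∨ S.card = 3 := by
      have h1' := Finset.card_le_card hSX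
      have h2' : 0 < S.card := Finset.card_pos.2 (Finset.nonempty_of_ne_empty hne)
      omega
    rcases hcard with hc | hc | hc
    · obtain ⟨x, rfl⟩ := Finset.card_eq_one.1 hc
      have hx : x ∈ X := Finset.singleton_subset_iff.1 hSX
      exact ⟨⟨{x}, T.singleton_mem x, Finset.singleton_inter_of_mem hx⟩, hne⟩
    · obtain ⟨C, hC, hCP⟩ := h1
      exact ⟨⟨C, hC, by rw [hCP, hc2 hc]⟩, hne⟩
    · have hSeq : S = X := Finset.eq_of_subset_of_card_le hSX (by omega)
      exact ⟨⟨Finset.univ, T.univ_mem, by rw [Finset.univ_inter, hSeq]⟩, hne⟩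

lemma auxRestrict_eq_iff (T₁ T₂ : RTree n) {X P Q : Finset (Fin n)} (hX : X.card = 3)
    (hP : P ∈ X.powersetCard 2) (hQ : Q ∈ X.powersetCard 2)
    (h1 : auxHasPair T₁.clusters X P) (h2 : auxHasPair T₂.clusters X Q) :
    famRestrict T₁.clusters X = famRestrict T₂.clusters X ↔ P = Q := by
  obtain ⟨hPX, hP2⟩ := Finset.mem_powersetCard.1 hP
  rw [auxRestrict_eq T₁ hX hP h1, auxRestrict_eq T₂ hX hQ h2]
  constructor
  · intro h
    have hPmem : P ∈ X.powerset.filter fun S => S ≠ ∅ ∧ (S.card = 2 → S = P) :=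
      Finset.mem_filter.2 ⟨Finset.mem_powerset.2 hPX,
        by rw [← Finset.nonempty_iff_ne_empty]; exact Finset.card_pos.1 (by omega),
        fun _ => rfl⟩
    rw [h] at hPmem
    exact (Finset.mem_filter.1 hPmem).2.2 hP2
  · rintro rfl; rfl

lemma auxD_iff (T₁ T₂ : RTree n) {X : Finset (Fin n)} (hX : X.card = 3) :
    (famResolved T₁.clusters X ∧ famResolved T₂.clusters X ∧
      famRestrict T₁.clusters X = famRestrict T₂.clusters X) ↔
    ∃ P ∈ X.powersetCard 2, auxHasPair T₁.clusters X P ∧ auxHasPair T₂.clusters X P := by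
  constructor
  · rintro ⟨hr1, hr2, heq⟩
    obtain ⟨P, hP, h1⟩ := (auxResolved_iff _ _).1 hr1
    obtain ⟨Q, hQ, h2⟩ := (auxResolved_iff _ _).1 hr2
    have : P = Q := (auxRestrict_eq_iff T₁ T₂ hX hP hQ h1 h2).1 heq
    subst this
    exact ⟨P, hP, h1, h2⟩
  · rintro ⟨P, hP, h1, h2⟩
    exact ⟨(auxResolved_iff _ _).2 ⟨P, hP, h1⟩, (auxResolved_iff _ _).2 ⟨P, hP, h2⟩,
      (auxRestrict_eq_iff T₁ T₂ hX hP hP h1 h2).2 rfl⟩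

/-- The action of a permutation on a rooted tree. -/
def auxMap (σ : Equiv.Perm (Fin n)) (T : RTree n) : RTree n where
  clusters := T.clusters.image (Finset.image σ)
  univ_mem := Finset.mem_image.2 ⟨Finset.univ, T.univ_mem, Finset.image_univ_equiv σ⟩
  singleton_mem := fun x => Finset.mem_image.2 ⟨{σ.symm x}, T.singleton_mem _, by simp⟩
  empty_not_mem := by
    intro h
    obtain ⟨C, hC, hC0⟩ := Finset.mem_image.1 h
    rw [Finset.image_eq_empty] at hC0
    exact T.empty_not_mem (hC0 ▸ hC)
  laminar := by
    intro C' hC' D' hD'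
    obtain ⟨C, hC, rfl⟩ := Finset.mem_image.1 hC'
    obtain ⟨D, hD, rfl⟩ := Finset.mem_image.1 hD'
    rcases T.laminar C hC D hD with h | h | h
    · exact Or.inl (Finset.image_subset_image h)
    · exact Or.inr (Or.inl (Finset.image_subset_image h))
    · refine Or.inr (Or.inr ?_)
      rw [← Finset.image_inter _ _ σ.injective, h, Finset.image_empty]

lemma auxMap_auxMap_inv (σ : Equiv.Perm (Fin n)) (T : RTree n) :
    auxMap σ⁻¹ (auxMap σ T) = T := by
  apply RTree.clusters_injective
  show (T.clusters.image (Finset.image σ)).image (Finset.image ⇑σ⁻¹) = T.clusters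
  rw [Finset.image_image]
  have : (Finset.image ⇑σ⁻¹ ∘ Finset.image ⇑σ) = id := by
    funext C
    simp only [Function.comp_apply, Finset.image_image, id_eq]
    have h2 : (⇑σ⁻¹ ∘ ⇑σ) = id := by funext x; simp
    rw [h2, Finset.image_id]
  rw [this, Finset.image_id]

lemma auxMap_inv_auxMap (σ : Equiv.Perm (Fin n)) (T : RTree n) :
    auxMap σ (auxMap σ⁻¹ T) = T := by
  have := auxMap_auxMap_inv σ⁻¹ T
  rwa [inv_inv] at this

lemma auxCount_map (σ : Equiv.Perm (Fin n)) (pr : RTree n → Prop) :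
    (Finset.univ.filter fun T : RTree n => pr (auxMap σ T)).card
      = (Finset.univ.filter pr).card := by
  apply Finset.card_bij (fun T _ => auxMap σ T)
  · intro T hT
    exact Finset.mem_filter.2 ⟨Finset.mem_univ _, (Finset.mem_filter.1 hT).2⟩
  · intro T₁ _ T₂ _ h
    have := congrArg (auxMap σ⁻¹) h
    rwa [auxMap_auxMap_inv, auxMap_auxMap_inv] at this
  · intro T hT
    exact ⟨auxMap σ⁻¹ T, Finset.mem_filter.2 ⟨Finset.mem_univ _, by
      rw [auxMap_inv_auxMap]; exact (Finset.mem_filter.1 hT).2⟩,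
      auxMap_inv_auxMap σ T⟩

lemma auxHasPair_map (σ : Equiv.Perm (Fin n)) (T : RTree n) (X P : Finset (Fin n)) :
    auxHasPair (auxMap σ T).clusters (X.image σ) (P.image σ) ↔
      auxHasPair T.clusters X P := by
  constructor
  · rintro ⟨C', hC', h⟩
    obtain ⟨C, hC, rfl⟩ := Finset.mem_image.1 hC'
    rw [← Finset.image_inter _ _ σ.injective] at h
    exact ⟨C, hC, Finset.image_injective σ.injective h⟩
  · rintro ⟨C, hC, rfl⟩
    exact ⟨C.image σ, Finset.mem_image_of_mem _ hC,
      (Finset.image_inter _ _ σ.injective).symm⟩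

lemma auxResolved_map (σ : Equiv.Perm (Fin n)) (T : RTree n) (X : Finset (Fin n)) :
    famResolved (auxMap σ T).clusters (X.image σ) ↔ famResolved T.clusters X := by
  constructor
  · rintro ⟨C', hC', h⟩
    obtain ⟨C, hC, rfl⟩ := Finset.mem_image.1 hC'
    rw [← Finset.image_inter _ _ σ.injective,
      Finset.card_image_of_injective _ σ.injective] at h
    exact ⟨C, hC, h⟩
  · rintro ⟨C, hC, h⟩
    refine ⟨C.image σ, Finset.mem_image_of_mem _ hC, ?_⟩
    rw [← Finset.image_inter _ _ σ.injective,
      Finset.card_image_of_injective _ σ.injective]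
    exact h

lemma auxExists_perm_image {X Y : Finset (Fin n)} (h : X.card = Y.card) :
    ∃ σ : Equiv.Perm (Fin n), X.image σ = Y := by
  classical
  have h1 : Fintype.card {x : Fin n // x ∈ X} = Fintype.card {x : Fin n // x ∈ Y} := by
    simp only [Fintype.card_coe, h]
  have h2 : Fintype.card {x : Fin n // ¬ x ∈ X} = Fintype.card {x : Fin n // ¬ x ∈ Y} := by
    rw [Fintype.card_subtype_compl, Fintype.card_subtype_compl, h1]
  set e := Fintype.equivOfCardEq h1 with he
  set f := Fintype.equivOfCardEq h2 with hf
  refine ⟨Equiv.subtypeCongr e f, ?_⟩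
  have hsub : X.image (Equiv.subtypeCongr e f) ⊆ Y := by
    intro y hy
    obtain ⟨x, hx, rfl⟩ := Finset.mem_image.1 hy
    have : Equiv.subtypeCongr e f x = (e ⟨x, hx⟩ : Fin n) := by
      simp [Equiv.subtypeCongr, hx]
    rw [this]
    exact (e ⟨x, hx⟩).2
  refine Finset.eq_of_subset_of_card_le hsub ?_
  rw [Finset.card_image_of_injective _ (Equiv.injective _)]
  omega

lemma auxCount_hasPair_const {X P Q : Finset (Fin n)} (hX : X.card = 3)
    (hP : P ∈ X.powersetCard 2) (hQ : Q ∈ X.powersetCard 2) :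
    (Finset.univ.filter fun T : RTree n => auxHasPair T.clusters X P).card
      = (Finset.univ.filter fun T : RTree n => auxHasPair T.clusters X Q).card := by
  obtain ⟨hPX, hP2⟩ := Finset.mem_powersetCard.1 hP
  obtain ⟨hQX, hQ2⟩ := Finset.mem_powersetCard.1 hQ
  obtain ⟨a, ha⟩ : ∃ a, X \ P = {a} :=
    Finset.card_eq_one.1 (by rw [Finset.card_sdiff_of_subset hPX]; omega)
  obtain ⟨b, hb⟩ : ∃ b, X \ Q = {b} :=
    Finset.card_eq_one.1 (by rw [Finset.card_sdiff_of_subset hQX]; omega)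
  have haX : a ∈ X := (Finset.mem_sdiff.1 (ha ▸ Finset.mem_singleton_self a)).1
  have hbX : b ∈ X := (Finset.mem_sdiff.1 (hb ▸ Finset.mem_singleton_self b)).1
  have hPe : P = X.erase a := by
    rw [Finset.erase_eq, ← ha, sdiff_sdiff_right_self,
      Finset.inf_eq_inter, Finset.inter_eq_right.2 hPX]
  have hQe : Q = X.erase b := by
    rw [Finset.erase_eq, ← hb, sdiff_sdiff_right_self,
      Finset.inf_eq_inter, Finset.inter_eq_right.2 hQX]
  set σ := Equiv.swap a b with hσ
  have hXmap : X.image σ = X := by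
    apply Finset.eq_of_subset_of_card_le
    · intro y hy
      obtain ⟨x, hx, rfl⟩ := Finset.mem_image.1 hy
      rcases Equiv.swap_apply_def a b x with _
      by_cases h1 : x = a
      · subst h1; rw [hσ, Equiv.swap_apply_left]; exact hbX
      · by_cases h2 : x = b
        · subst h2; rw [hσ, Equiv.swap_apply_right]; exact haX
        · rw [hσ, Equiv.swap_apply_of_ne_of_ne h1 h2]; exact hx
    · rw [Finset.card_image_of_injective _ (Equiv.injective _)]
  have hPmap : P.image σ = Q := by
    rw [hPe, hQe, Finset.image_erase (Equiv.injective σ), hXmap, hσ,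
      Equiv.swap_apply_left]
  have hiff : ∀ T : RTree n,
      auxHasPair T.clusters X P ↔ auxHasPair (auxMap σ T).clusters X Q := by
    intro T
    conv_rhs => rw [← hXmap, ← hPmap]
    exact (auxHasPair_map σ T X P).symm
  calc (Finset.univ.filter fun T : RTree n => auxHasPair T.clusters X P).card
      = (Finset.univ.filter fun T : RTree n =>
          auxHasPair (auxMap σ T).clusters X Q).card := by
        congr 1
        apply Finset.filter_congr
        intro T _
        simp only [hiff T]
    _ = _ := auxCount_map σ (fun T => auxHasPair T.clusters X Q)

lemma auxCount_resolved_const {X Y : Finset (Fin n)} (hX : X.card = 3) (hY : Y.card = 3) :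
    (Finset.univ.filter fun T : RTree n => famResolved T.clusters Y).card
      = (Finset.univ.filter fun T : RTree n => famResolved T.clusters X).card := by
  obtain ⟨σ, hσ⟩ : ∃ σ : Equiv.Perm (Fin n), X.image σ = Y :=
    auxExists_perm_image (by omega)
  have hiff : ∀ T : RTree n,
      famResolved T.clusters X ↔ famResolved (auxMap σ T).clusters Y := by
    intro T
    conv_rhs => rw [← hσ]
    exact (auxResolved_map σ T X).symm
  calc (Finset.univ.filter fun T : RTree n => famResolved T.clusters Y).card
      = (Finset.univ.filter fun T : RTree n =>
          famResolved (auxMap σ T).clusters Y).card := (auxCount_map σ _).symm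
    _ = _ := by
        congr 1
        apply Finset.filter_congr
        intro T _
        simp only [hiff T]

lemma auxSum_ite_exists {β : Type*} [DecidableEq β] {s : Finset β} {q : β → Prop}
    (h : ∀ b₁ ∈ s, ∀ b₂ ∈ s, q b₁ → q b₂ → b₁ = b₂) :
    (∑ b ∈ s, if q b then (1 : ℝ) else 0) = if ∃ b ∈ s, q b then 1 else 0 := by
  by_cases hex : ∃ b ∈ s, q b
  · obtain ⟨b₀, hb₀, hq₀⟩ := hex
    rw [if_pos ⟨b₀, hb₀, hq₀⟩]
    have : ∀ b ∈ s, (if q b then (1 : ℝ) else 0) = if b = b₀ then 1 else 0 := by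
      intro b hb
      by_cases hqb : q b
      · rw [if_pos hqb, if_pos (h b hb b₀ hb₀ hqb hq₀)]
      · rw [if_neg hqb, if_neg (fun hbeq => hqb (by rw [hbeq]; exact hq₀))]
    rw [Finset.sum_congr rfl this, Finset.sum_ite_eq' s b₀ (fun _ => (1:ℝ))]
    exact if_pos hb₀
  · rw [if_neg hex]
    apply Finset.sum_eq_zero
    intro b hb
    rw [if_neg (fun hqb => hex ⟨b, hb, hqb⟩)]

lemma auxIte_and (A B : Prop) :
    (if A ∧ B then (1 : ℝ) else 0) = (if A then 1 else 0) * (if B then 1 else 0) := by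
  by_cases hA : A <;> by_cases hB : B <;> simp [hA, hB]

end AuxProof


section AuxProof2

open Finset

variable {n : ℕ}

lemma auxD_term (T₁ T₂ : RTree n) {Y : Finset (Fin n)} (hY : Y.card = 3) :
    (if (famResolved T₁.clusters Y ∧ famResolved T₂.clusters Y ∧
        famRestrict T₁.clusters Y ≠ famRestrict T₂.clusters Y) then (1:ℝ) else 0)
    = (if famResolved T₁.clusters Y then (1:ℝ) else 0) *
        (if famResolved T₂.clusters Y then (1:ℝ) else 0)
      - ∑ P ∈ Y.powersetCard 2,
          (if auxHasPair T₁.clusters Y P then (1:ℝ) else 0) *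
            (if auxHasPair T₂.clusters Y P then (1:ℝ) else 0) := by
  have hsum : (∑ P ∈ Y.powersetCard 2,
      (if auxHasPair T₁.clusters Y P then (1:ℝ) else 0) *
        (if auxHasPair T₂.clusters Y P then (1:ℝ) else 0))
      = if (famResolved T₁.clusters Y ∧ famResolved T₂.clusters Y ∧
            famRestrict T₁.clusters Y = famRestrict T₂.clusters Y) then (1:ℝ) else 0 := by
    by_cases h : famResolved T₁.clusters Y ∧ famResolved T₂.clusters Y ∧
        famRestrict T₁.clusters Y = famRestrict T₂.clusters Y
    · rw [if_pos h]
      obtain ⟨P, hP, hp1, hp2⟩ := (auxD_iff T₁ T₂ hY).1 h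
      rw [Finset.sum_eq_single_of_mem P hP]
      · rw [if_pos hp1, if_pos hp2, mul_one]
      · intro Q hQ hQP
        by_cases hq1 : auxHasPair T₁.clusters Y Q
        · by_cases hq2 : auxHasPair T₂.clusters Y Q
          · exact absurd (auxPair_unique T₁ hY hQ hP hq1 hp1) hQP
          · rw [if_neg hq2, mul_zero]
        · rw [if_neg hq1, zero_mul]
    · rw [if_neg h]
      apply Finset.sum_eq_zero
      intro P hP
      by_cases hq1 : auxHasPair T₁.clusters Y P
      · by_cases hq2 : auxHasPair T₂.clusters Y P
        · exact absurd ((auxD_iff T₁ T₂ hY).2 ⟨P, hP, hq1, hq2⟩) h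
        · rw [if_neg hq2, mul_zero]
      · rw [if_neg hq1, zero_mul]
  rw [hsum, ← auxIte_and]
  by_cases h1 : famResolved T₁.clusters Y <;>
    by_cases h2 : famResolved T₂.clusters Y <;>
    by_cases h3 : famRestrict T₁.clusters Y = famRestrict T₂.clusters Y <;>
    simp [h1, h2, h3]

lemma auxInner (Y : Finset (Fin n)) (hY : Y.card = 3) (p : ℝ) :
    (∑ T₁ : RTree n, ∑ T₂ : RTree n,
      ((if (famResolved T₁.clusters Y ∧ famResolved T₂.clusters Y ∧
          famRestrict T₁.clusters Y ≠ famRestrict T₂.clusters Y) then (1:ℝ) else 0)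
       + p * ((if (famResolved T₁.clusters Y ∧ ¬ famResolved T₂.clusters Y)
                then (1:ℝ) else 0)
            + (if (famResolved T₂.clusters Y ∧ ¬ famResolved T₁.clusters Y)
                then (1:ℝ) else 0))))
    = 2/3 * ((Finset.univ.filter fun T : RTree n =>
          famResolved T.clusters Y).card : ℝ)^2
      + 2 * p * ((Finset.univ.filter fun T : RTree n =>
          famResolved T.clusters Y).card : ℝ)
        * ((Fintype.card (RTree n) : ℝ) -
          ((Finset.univ.filter fun T : RTree n =>
            famResolved T.clusters Y).card : ℝ)) := by
  set r : ℝ := ((Finset.univ.filter fun T : RTree n =>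
      famResolved T.clusters Y).card : ℝ) with hrdef
  have hr : (∑ T : RTree n, if famResolved T.clusters Y then (1:ℝ) else 0) = r := by
    rw [Finset.sum_boole, hrdef]
  have hu : (∑ T : RTree n, if ¬ famResolved T.clusters Y then (1:ℝ) else 0)
      = (Fintype.card (RTree n) : ℝ) - r := by
    rw [Finset.sum_boole]
    have h0 := Finset.card_filter_add_card_filter_not (s := (Finset.univ : Finset (RTree n)))
      (p := fun T => famResolved T.clusters Y)
    rw [Finset.card_univ] at h0
    have h2 : ((Finset.univ.filter fun T : RTree n => famResolved T.clusters Y).card : ℝ)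
        + ((Finset.univ.filter fun T : RTree n => ¬ famResolved T.clusters Y).card : ℝ)
        = (Fintype.card (RTree n) : ℝ) := by exact_mod_cast h0
    rw [hrdef]
    linarith
  -- pairs
  have hpc : (Y.powersetCard 2).card = 3 := by
    rw [Finset.card_powersetCard, hY]
    decide
  obtain ⟨P₀, hP₀⟩ : (Y.powersetCard 2).Nonempty :=
    Finset.card_pos.1 (by rw [hpc]; norm_num)
  set a : ℝ := ((Finset.univ.filter fun T : RTree n =>
      auxHasPair T.clusters Y P₀).card : ℝ) with hadef
  have ha : ∀ P ∈ Y.powersetCard 2,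
      (∑ T : RTree n, if auxHasPair T.clusters Y P then (1:ℝ) else 0) = a := by
    intro P hP
    rw [Finset.sum_boole, hadef]
    exact_mod_cast congrArg (Nat.cast (R := ℝ)) (auxCount_hasPair_const hY hP hP₀)
  have hra : r = 3 * a := by
    have step1 : ∀ T : RTree n,
        (if famResolved T.clusters Y then (1:ℝ) else 0)
        = ∑ P ∈ Y.powersetCard 2, if auxHasPair T.clusters Y P then (1:ℝ) else 0 := by
      intro T
      rw [auxSum_ite_exists (q := fun P => auxHasPair T.clusters Y P)
        (fun P hP Q hQ h₁ h₂ => auxPair_unique T hY hP hQ h₁ h₂)]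
      by_cases h : famResolved T.clusters Y
      · rw [if_pos h, if_pos ((auxResolved_iff _ _).1 h)]
      · rw [if_neg h, if_neg (fun hex => h ((auxResolved_iff _ _).2 hex))]
    calc r = ∑ T : RTree n, if famResolved T.clusters Y then (1:ℝ) else 0 := hr.symm
      _ = ∑ T : RTree n, ∑ P ∈ Y.powersetCard 2,
            if auxHasPair T.clusters Y P then (1:ℝ) else 0 :=
          Finset.sum_congr rfl (fun T _ => step1 T)
      _ = ∑ P ∈ Y.powersetCard 2, ∑ T : RTree n,
            if auxHasPair T.clusters Y P then (1:ℝ) else 0 := Finset.sum_comm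
      _ = ∑ P ∈ Y.powersetCard 2, a := Finset.sum_congr rfl ha
      _ = 3 * a := by rw [Finset.sum_const, hpc, nsmul_eq_mul]; norm_num
  -- split the big sum
  have hsplit : (∑ T₁ : RTree n, ∑ T₂ : RTree n,
      ((if (famResolved T₁.clusters Y ∧ famResolved T₂.clusters Y ∧
          famRestrict T₁.clusters Y ≠ famRestrict T₂.clusters Y) then (1:ℝ) else 0)
       + p * ((if (famResolved T₁.clusters Y ∧ ¬ famResolved T₂.clusters Y)
                then (1:ℝ) else 0)
            + (if (famResolved T₂.clusters Y ∧ ¬ famResolved T₁.clusters Y)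
                then (1:ℝ) else 0))))
    = (r * r - 3 * (a * a)) + p * (r * ((Fintype.card (RTree n) : ℝ) - r)
        + ((Fintype.card (RTree n) : ℝ) - r) * r) := by
    have expand : ∀ T₁ T₂ : RTree n,
        ((if (famResolved T₁.clusters Y ∧ famResolved T₂.clusters Y ∧
            famRestrict T₁.clusters Y ≠ famRestrict T₂.clusters Y) then (1:ℝ) else 0)
         + p * ((if (famResolved T₁.clusters Y ∧ ¬ famResolved T₂.clusters Y)
                  then (1:ℝ) else 0)
              + (if (famResolved T₂.clusters Y ∧ ¬ famResolved T₁.clusters Y)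
                  then (1:ℝ) else 0)))
        = ((if famResolved T₁.clusters Y then (1:ℝ) else 0) *
            (if famResolved T₂.clusters Y then (1:ℝ) else 0)
          - ∑ P ∈ Y.powersetCard 2,
              (if auxHasPair T₁.clusters Y P then (1:ℝ) else 0) *
                (if auxHasPair T₂.clusters Y P then (1:ℝ) else 0))
         + p * ((if famResolved T₁.clusters Y then (1:ℝ) else 0) *
                  (if ¬ famResolved T₂.clusters Y then (1:ℝ) else 0)
              + (if ¬ famResolved T₁.clusters Y then (1:ℝ) else 0) *
                  (if famResolved T₂.clusters Y then (1:ℝ) else 0)) := by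
      intro T₁ T₂
      rw [auxD_term T₁ T₂ hY]
      by_cases h1 : famResolved T₁.clusters Y <;>
        by_cases h2 : famResolved T₂.clusters Y <;> simp [h1, h2]
    simp_rw [expand]
    rw [Finset.sum_congr rfl (fun T₁ _ => Finset.sum_add_distrib),
      Finset.sum_add_distrib]
    congr 1
    · rw [Finset.sum_congr rfl (fun T₁ _ => Finset.sum_sub_distrib _ _),
        Finset.sum_sub_distrib]
      congr 1
      · simp_rw [← Finset.mul_sum, hr, ← Finset.sum_mul]
        rw [hr]
      · -- ∑ T₁ ∑ T₂ ∑ P  = 3 a²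
        rw [Finset.sum_congr rfl (fun T₁ _ => Finset.sum_comm), Finset.sum_comm]
        have : ∀ P ∈ Y.powersetCard 2,
            (∑ T₁ : RTree n, ∑ T₂ : RTree n,
              (if auxHasPair T₁.clusters Y P then (1:ℝ) else 0) *
                (if auxHasPair T₂.clusters Y P then (1:ℝ) else 0)) = a * a := by
          intro P hP
          simp_rw [← Finset.mul_sum, ha P hP, ← Finset.sum_mul, ha P hP]
        rw [Finset.sum_congr rfl this, Finset.sum_const, hpc, nsmul_eq_mul]
        norm_num
    · simp_rw [← Finset.mul_sum]
      congr 1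
      rw [Finset.sum_congr rfl (fun T₁ _ => Finset.sum_add_distrib),
        Finset.sum_add_distrib]
      congr 1
      · simp_rw [← Finset.mul_sum, hu, ← Finset.sum_mul, hr]
      · simp_rw [← Finset.mul_sum, hr, ← Finset.sum_mul, hu]
  rw [hsplit, hra]
  ring

end AuxProof2

/-- **Lemma (expected parametric triplet distance).**  For `T₁`, `T₂` chosen
independently and uniformly at random from `RP(n)` and any `p ∈ [0,1]`,
`E(d⁽ᵖ⁾(T₁,T₂)) = C(n,3) · ( (2/3)·r'(n)² + 2·p·r'(n)·u'(n) )`, where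
`u'(n) = 1 - r'(n)`. -/
theorem expected_parametric_triplet_distance' (n : ℕ) (hn : 3 ≤ n)
    (p : ℝ) (hp0 : 0 ≤ p) (hp1 : p ≤ 1)
    (X : Finset (Fin n)) (hX : X.card = 3) :
    (∑ T₁ : RTree n, ∑ T₂ : RTree n, RTree.pdist p T₁ T₂) /
        (Fintype.card (RTree n) : ℝ) ^ 2 =
      (n.choose 3 : ℝ) *
        (2 / 3 * rResProb n X ^ 2 +
          2 * p * rResProb n X * (1 - rResProb n X)) := by
  classical
  have h0n : 0 < n := by omega
  have hne : Nonempty (RTree n) := by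
    refine ⟨⟨insert Finset.univ (Finset.univ.image fun x : Fin n => {x}),
      Finset.mem_insert_self _ _,
      fun x => Finset.mem_insert_of_mem (Finset.mem_image_of_mem _ (Finset.mem_univ x)),
      ?_, ?_⟩⟩
    · intro h
      rcases Finset.mem_insert.1 h with h | h
      · have h' := congrArg Finset.card h
        rw [Finset.card_empty, Finset.card_univ, Fintype.card_fin] at h'
        omega
      · obtain ⟨x, _, hx⟩ := Finset.mem_image.1 h
        exact Finset.singleton_ne_empty x hx
    · intro C hC D hD
      rcases Finset.mem_insert.1 hC with rfl | hC
      · exact Or.inr (Or.inl (Finset.subset_univ D))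
      rcases Finset.mem_insert.1 hD with rfl | hD
      · exact Or.inl (Finset.subset_univ C)
      obtain ⟨x, _, rfl⟩ := Finset.mem_image.1 hC
      obtain ⟨y, _, rfl⟩ := Finset.mem_image.1 hD
      by_cases hxy : x = y
      · subst hxy; exact Or.inl (subset_refl _)
      · exact Or.inr (Or.inr
          (Finset.singleton_inter_of_notMem (Finset.notMem_singleton.2 hxy)))
  have hNpos : (0:ℝ) < (Fintype.card (RTree n) : ℝ) := by
    exact_mod_cast Fintype.card_pos
  have hpdist : ∀ T₁ T₂ : RTree n, RTree.pdist p T₁ T₂ =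
      ∑ Y ∈ triplets n,
        ((if (famResolved T₁.clusters Y ∧ famResolved T₂.clusters Y ∧
            famRestrict T₁.clusters Y ≠ famRestrict T₂.clusters Y) then (1:ℝ) else 0)
         + p * ((if (famResolved T₁.clusters Y ∧ ¬ famResolved T₂.clusters Y)
                  then (1:ℝ) else 0)
              + (if (famResolved T₂.clusters Y ∧ ¬ famResolved T₁.clusters Y)
                  then (1:ℝ) else 0))) := by
    intro T₁ T₂
    rw [Finset.sum_add_distrib, ← Finset.mul_sum, Finset.sum_add_distrib,
      Finset.sum_boole, Finset.sum_boole, Finset.sum_boole]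
    rfl
  have hswap : (∑ T₁ : RTree n, ∑ T₂ : RTree n, RTree.pdist p T₁ T₂)
      = ∑ Y ∈ triplets n, ∑ T₁ : RTree n, ∑ T₂ : RTree n,
        ((if (famResolved T₁.clusters Y ∧ famResolved T₂.clusters Y ∧
            famRestrict T₁.clusters Y ≠ famRestrict T₂.clusters Y) then (1:ℝ) else 0)
         + p * ((if (famResolved T₁.clusters Y ∧ ¬ famResolved T₂.clusters Y)
                  then (1:ℝ) else 0)
              + (if (famResolved T₂.clusters Y ∧ ¬ famResolved T₁.clusters Y)
                  then (1:ℝ) else 0))) := by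
    rw [Finset.sum_congr rfl (fun T₁ _ => Finset.sum_congr rfl (fun T₂ _ => hpdist T₁ T₂)),
      Finset.sum_congr rfl (fun T₁ _ => Finset.sum_comm), Finset.sum_comm]
  have heval : ∀ Y ∈ triplets n, (∑ T₁ : RTree n, ∑ T₂ : RTree n,
        ((if (famResolved T₁.clusters Y ∧ famResolved T₂.clusters Y ∧
            famRestrict T₁.clusters Y ≠ famRestrict T₂.clusters Y) then (1:ℝ) else 0)
         + p * ((if (famResolved T₁.clusters Y ∧ ¬ famResolved T₂.clusters Y)
                  then (1:ℝ) else 0)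
              + (if (famResolved T₂.clusters Y ∧ ¬ famResolved T₁.clusters Y)
                  then (1:ℝ) else 0))))
      = 2/3 * ((Finset.univ.filter fun T : RTree n =>
            famResolved T.clusters X).card : ℝ)^2
        + 2 * p * ((Finset.univ.filter fun T : RTree n =>
            famResolved T.clusters X).card : ℝ)
          * ((Fintype.card (RTree n) : ℝ) -
            ((Finset.univ.filter fun T : RTree n =>
              famResolved T.clusters X).card : ℝ)) := by
    intro Y hY
    have hY3 : Y.card = 3 := by
      simp only [triplets, Finset.mem_powersetCard] at hY
      exact hY.2
    rw [auxInner Y hY3 p, auxCount_resolved_const hX hY3]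
  rw [hswap, Finset.sum_congr rfl heval, Finset.sum_const]
  have hcardtrip : (triplets n).card = n.choose 3 := by
    simp [triplets, Finset.card_powersetCard]
  rw [hcardtrip, nsmul_eq_mul]
  have hres : rResProb n X = ((Finset.univ.filter fun T : RTree n =>
      famResolved T.clusters X).card : ℝ) / (Fintype.card (RTree n) : ℝ) := rfl
  rw [hres]
  set N : ℝ := (Fintype.card (RTree n) : ℝ) with hN
  set R : ℝ := ((Finset.univ.filter fun T : RTree n =>
      famResolved T.clusters X).card : ℝ) with hR
  have hN0 : N ≠ 0 := ne_of_gt hNpos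
  field_simp
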